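/- For every parameter h ∈ [1/2, 1], the diffusion coefficient of the lifted Bernoulli shift map exists and lies on the linear plateau: lim_{n→∞} (1/(2n)) ∫_0^1 (M_h^n(x) − x)² dx = 1/2. -/

import Mathlib

open Filter

/-- The lifted Bernoulli shift map `M_h`. -/
noncomputable def bernM (h x : ℝ) : ℝ :=
  if Int.fract x < 1/2 then (⌊x⌋ : ℝ) + 2 * Int.fract x + h
  else (⌊x⌋ : ℝ) + 2 * Int.fract x - 1 - h

open MeasureTheory Set intervalIntegral

namespace BernAux

lemma measurable_bernM (h : ℝ) : Measurable (bernM h) := by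
  have hfr : Measurable (Int.fract : ℝ → ℝ) := measurable_fract
  have hfl : Measurable (fun x : ℝ => (⌊x⌋ : ℝ)) := by
    have : (fun x : ℝ => (⌊x⌋ : ℝ)) = fun x => x - Int.fract x := by
      funext x; rw [eq_sub_iff_add_eq, add_comm]; exact Int.fract_add_floor x
    rw [this]; exact measurable_id.sub hfr
  unfold bernM
  exact Measurable.ite (measurableSet_lt hfr measurable_const)
    ((hfl.add (hfr.const_mul 2)).add measurable_const)
    (((hfl.add (hfr.const_mul 2)).sub measurable_const).sub measurable_const)

lemma bernM_add_one (h x : ℝ) : bernM h (x + 1) = bernM h x + 1 := by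
  unfold bernM
  rw [Int.fract_add_one, Int.floor_add_one]
  split_ifs with hc <;> push_cast <;> ring

lemma iter_add_one (h : ℝ) (n : ℕ) (x : ℝ) :
    (bernM h)^[n] (x + 1) = (bernM h)^[n] x + 1 := by
  induction n generalizing x with
  | zero => simp
  | succ n ih =>
    rw [Function.iterate_succ_apply, Function.iterate_succ_apply, bernM_add_one, ih]

lemma measurable_iter (h : ℝ) (n : ℕ) : Measurable ((bernM h)^[n]) :=
  (measurable_bernM h).iterate n

lemma dd_bound (h : ℝ) (h0 : 0 ≤ h) (h2 : h ≤ 1) (x : ℝ) : |bernM h x - x| ≤ 2 := by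
  have hf0 := Int.fract_nonneg x
  have hf1 := Int.fract_lt_one x
  have hx : (⌊x⌋ : ℝ) + Int.fract x = x := Int.floor_add_fract x
  unfold bernM
  split_ifs with hc <;> rw [abs_le] <;> constructor <;> nlinarith

lemma g_bound (h : ℝ) (h0 : 0 ≤ h) (h2 : h ≤ 1) (n : ℕ) (x : ℝ) :
    |(bernM h)^[n] x - x| ≤ 2 * n := by
  induction n generalizing x with
  | zero => simp
  | succ n ih =>
    rw [Function.iterate_succ_apply]
    have h1 := ih (bernM h x)
    have h2' := dd_bound h h0 h2 x
    have h3 := abs_add_le ((bernM h)^[n] (bernM h x) - bernM h x) (bernM h x - x)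
    have e : (bernM h)^[n] (bernM h x) - bernM h x + (bernM h x - x) =
        (bernM h)^[n] (bernM h x) - x := by ring
    rw [e] at h3
    push_cast
    linarith

/-- interval integrability from measurability and a bound on the interval -/
lemma II {f : ℝ → ℝ} (hf : Measurable f) {C a b : ℝ}
    (hC : ∀ x ∈ Set.uIoc a b, |f x| ≤ C) : IntervalIntegrable f volume a b := by
  rw [intervalIntegrable_iff]
  apply Integrable.mono' (integrableOn_const measure_Ioc_lt_top.ne)
  · exact hf.aestronglyMeasurable.restrict
  · exact ae_restrict_of_forall_mem measurableSet_uIoc hC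

/-- congruence of interval integrals away from finitely many points -/
lemma congr_fin {f g : ℝ → ℝ} {a b : ℝ} (S : Finset ℝ)
    (hfg : ∀ x ∈ Set.uIoc a b, x ∉ S → f x = g x) :
    ∫ x in a..b, f x = ∫ x in a..b, g x := by
  apply intervalIntegral.integral_congr_ae
  have hS : ∀ᵐ x : ℝ, x ∉ (S : Set ℝ) :=
    measure_eq_zero_iff_ae_notMem.1 (S.countable_toSet.measure_zero _)
  filter_upwards [hS] with x hx hmem
  exact hfg x hmem hx

lemma bernM_left (h : ℝ) {x : ℝ} (hx0 : 0 ≤ x) (hx : x < 1/2) : bernM h x = 2*x + h := by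
  have hfr : Int.fract x = x := Int.fract_eq_self.2 ⟨hx0, by linarith⟩
  have hfl : ⌊x⌋ = 0 := Int.floor_eq_zero_iff.2 ⟨hx0, by linarith⟩
  unfold bernM
  rw [hfr, hfl, if_pos hx]; push_cast; ring

lemma bernM_right (h : ℝ) {x : ℝ} (hx0 : 1/2 ≤ x) (hx : x < 1) : bernM h x = 2*x - 1 - h := by
  have hfr : Int.fract x = x := Int.fract_eq_self.2 ⟨by linarith, hx⟩
  have hfl : ⌊x⌋ = 0 := Int.floor_eq_zero_iff.2 ⟨by linarith, hx⟩
  unfold bernM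
  rw [hfr, hfl, if_neg (by linarith)]; push_cast; ring

lemma integral_quad (a b A B C : ℝ) :
    ∫ x in a..b, (A*x^2 + B*x + C) =
      A*(b^3 - a^3)/3 + B*(b^2 - a^2)/2 + C*(b - a) := by
  have i1 : IntervalIntegrable (fun x : ℝ => A*x^2) volume a b :=
    (Continuous.intervalIntegrable (by continuity) a b)
  have i2 : IntervalIntegrable (fun x : ℝ => B*x) volume a b :=
    (Continuous.intervalIntegrable (by continuity) a b)
  have i3 : IntervalIntegrable (fun x : ℝ => C) volume a b :=
    intervalIntegrable_const
  rw [intervalIntegral.integral_add (i1.add i2) i3, intervalIntegral.integral_add i1 i2,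
    intervalIntegral.integral_const_mul, intervalIntegral.integral_const_mul,
    integral_id, intervalIntegral.integral_const]
  have h2 : ∫ x in a..b, x^2 = (b^3 - a^3)/3 := by
    have := integral_pow (a := a) (b := b) 2
    push_cast at this
    rw [this]; norm_num
  rw [h2, smul_eq_mul]; ring


noncomputable def dd (h x : ℝ) : ℝ := bernM h x - x

noncomputable def ss (h x : ℝ) : ℝ :=
  if x < 1 - h then -h/2
  else if x < 1/2 then -(1/4) - h/2
  else if x < h then 1/4 + h/2
  else h/2

noncomputable def gg (h : ℝ) (n : ℕ) (x : ℝ) : ℝ := (bernM h)^[n] x - x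

lemma measurable_dd (h : ℝ) : Measurable (dd h) := (measurable_bernM h).sub measurable_id

lemma measurable_ss (h : ℝ) : Measurable (ss h) := by
  unfold ss
  exact Measurable.ite (measurableSet_lt measurable_id measurable_const) measurable_const
    (Measurable.ite (measurableSet_lt measurable_id measurable_const) measurable_const
      (Measurable.ite (measurableSet_lt measurable_id measurable_const) measurable_const
        measurable_const))

lemma measurable_gg (h : ℝ) (n : ℕ) : Measurable (gg h n) :=
  (measurable_iter h n).sub measurable_id

lemma dd_bdd (h : ℝ) (h0 : 0 ≤ h) (h2 : h ≤ 1) (x : ℝ) : |dd h x| ≤ 2 := dd_bound h h0 h2 x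

lemma ss_bdd (h : ℝ) (h0 : 0 ≤ h) (h2 : h ≤ 1) (x : ℝ) : |ss h x| ≤ 1 := by
  unfold ss
  split_ifs <;> rw [abs_le] <;> constructor <;> linarith

lemma gg_bdd (h : ℝ) (h0 : 0 ≤ h) (h2 : h ≤ 1) (n : ℕ) (x : ℝ) : |gg h n x| ≤ 2 * n :=
  g_bound h h0 h2 n x

lemma gg_per (h : ℝ) (n : ℕ) (x : ℝ) : gg h n (x + 1) = gg h n x := by
  unfold gg; rw [iter_add_one]; ring

lemma gg_succ (h : ℝ) (n : ℕ) (x : ℝ) : gg h (n + 1) x = gg h n (bernM h x) + dd h x := by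
  unfold gg dd; rw [Function.iterate_succ_apply]; ring

lemma gg_one (h : ℝ) (x : ℝ) : gg h 1 x = dd h x := by
  unfold gg dd; rw [Function.iterate_one]

lemma abs_le_uIoc {a b x : ℝ} (hx : x ∈ Set.uIoc a b) : |x| ≤ |a| + |b| := by
  rcases Set.mem_uIoc.1 hx with ⟨h1, h2⟩ | ⟨h1, h2⟩ <;> rw [abs_le] <;> constructor <;>
    nlinarith [neg_abs_le a, le_abs_self b, neg_abs_le b, le_abs_self a,
      abs_nonneg a, abs_nonneg b]

lemma II_mul_G {G : ℝ → ℝ} (hG : Measurable G) {CG : ℝ} (hGb : ∀ x, |G x| ≤ CG)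
    (α β a b : ℝ) : IntervalIntegrable (fun u => (α*u+β)*G u) volume a b := by
  apply II (((measurable_const.mul measurable_id).add measurable_const).mul hG)
    (C := (|α| *(|a|+|b|)+|β|)*CG)
  intro x hx
  have h1 : |x| ≤ |a| + |b| := abs_le_uIoc hx
  have h2 := hGb x
  have h3 : (0:ℝ) ≤ |G x| := abs_nonneg _
  have h4 : |α*x+β| ≤ |α| *(|a|+|b|)+|β| := by
    calc |α*x+β| ≤ |α*x| + |β| := abs_add_le _ _
    _ = |α| * |x| + |β| := by rw [abs_mul]
    _ ≤ |α| *(|a|+|b|)+|β| := by nlinarith [abs_nonneg α]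
  calc |(α*x+β)*G x| = |α*x+β| * |G x| := abs_mul _ _
  _ ≤ (|α| *(|a|+|b|)+|β|)*CG := by nlinarith [abs_nonneg (α*x+β)]

lemma II_G {G : ℝ → ℝ} (hG : Measurable G) {CG : ℝ} (hGb : ∀ x, |G x| ≤ CG)
    (a b : ℝ) : IntervalIntegrable G volume a b := II hG (fun x _ => hGb x)

lemma II_id_G {G : ℝ → ℝ} (hG : Measurable G) {CG : ℝ} (hGb : ∀ x, |G x| ≤ CG)
    (a b : ℝ) : IntervalIntegrable (fun u => u * G u) volume a b := by
  apply II (measurable_id'.mul hG) (C := (|a|+|b|)*CG)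
  intro x hx
  simp only [Pi.mul_apply, abs_mul]
  nlinarith [abs_le_uIoc hx, hGb x, abs_nonneg x, abs_nonneg (G x)]

lemma affine_split {G : ℝ → ℝ} (hG : Measurable G) {CG : ℝ} (hGb : ∀ x, |G x| ≤ CG)
    (α β a b : ℝ) :
    ∫ u in a..b, (α*u+β)*G u =
      α*(∫ u in a..b, u*G u) + β*(∫ u in a..b, G u) := by
  rw [show (∫ u in a..b, (α*u+β)*G u) = ∫ u in a..b, (α*(u*G u) + β*G u) from
    intervalIntegral.integral_congr (fun u _ => by ring),
    intervalIntegral.integral_add ((II_id_G hG hGb a b).const_mul α)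
      ((II_G hG hGb a b).const_mul β),
    intervalIntegral.integral_const_mul, intervalIntegral.integral_const_mul]

/-- Master change-of-variables identity for `∫ w · (G ∘ M)`. -/
lemma key (h : ℝ) (w G : ℝ → ℝ) (hw : Measurable w) (hG : Measurable G)
    {Cw CG : ℝ} (hwb : ∀ x, |w x| ≤ Cw) (hGb : ∀ x, |G x| ≤ CG)
    (hper : ∀ x, G (x + 1) = G x) :
    ∫ x in (0:ℝ)..1, w x * G (bernM h x)
      = 2⁻¹ * ((∫ u in (0:ℝ)..h, w ((u+1-h)/2) * G u)
        + (∫ u in h..(1:ℝ), w ((u-h)/2) * G u)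
        + (∫ u in (0:ℝ)..(1-h), w ((u+1+h)/2) * G u)
        + (∫ u in (1-h)..(1:ℝ), w ((u+h)/2) * G u)) := by
  have hM := measurable_bernM h
  have hcompI : ∀ a b : ℝ, IntervalIntegrable (fun x => w x * G (bernM h x)) volume a b := by
    intro a b
    apply II (hw.mul (hG.comp hM)) (C := Cw * CG)
    intro x _
    rw [Pi.mul_apply, abs_mul]
    exact mul_le_mul (hwb x) (hGb _) (abs_nonneg _) ((abs_nonneg _).trans (hwb x))
  have mF1 : Measurable (fun u : ℝ => w ((u-h)/2) * G u) :=
    (hw.comp ((measurable_id.sub measurable_const).div_const 2)).mul hG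
  have mF2 : Measurable (fun u : ℝ => w ((u+1+h)/2) * G u) :=
    (hw.comp (((measurable_id.add measurable_const).add measurable_const).div_const 2)).mul hG
  have bF : ∀ (y : ℝ) (z : ℝ), |w y * G z| ≤ Cw * CG := by
    intro y z
    rw [abs_mul]
    exact mul_le_mul (hwb y) (hGb _) (abs_nonneg _) ((abs_nonneg _).trans (hwb y))
  have iF1 : ∀ a b : ℝ, IntervalIntegrable (fun u : ℝ => w ((u-h)/2) * G u) volume a b :=
    fun a b => II mF1 (C := Cw * CG) (fun x _ => bF _ _)
  have iF2 : ∀ a b : ℝ, IntervalIntegrable (fun u : ℝ => w ((u+1+h)/2) * G u) volume a b :=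
    fun a b => II mF2 (C := Cw * CG) (fun x _ => bF _ _)
  -- left half
  have e1 : ∫ x in (0:ℝ)..(1/2), w x * G (bernM h x)
      = ∫ x in (0:ℝ)..(1/2), (fun u : ℝ => w ((u-h)/2) * G u) (2*x + h) := by
    apply congr_fin {(1/2 : ℝ)}
    intro x hx hnot
    rw [Set.uIoc_of_le (by norm_num : (0:ℝ) ≤ 1/2)] at hx
    simp only [Finset.mem_singleton] at hnot
    have hx2 : x < 1/2 := lt_of_le_of_ne hx.2 hnot
    show w x * G (bernM h x) = w ((2*x + h - h)/2) * G (2*x + h)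
    rw [show (2*x + h - h)/2 = x from by ring, bernM_left h hx.1.le hx2]
  have e2 : ∫ x in (0:ℝ)..(1/2), (fun u : ℝ => w ((u-h)/2) * G u) (2*x + h)
      = 2⁻¹ * ∫ u in h..(1+h), w ((u-h)/2) * G u := by
    have := intervalIntegral.integral_comp_mul_add (a := 0) (b := 1/2)
      (fun u : ℝ => w ((u-h)/2) * G u) (two_ne_zero) h
    rw [show 2*(0:ℝ) + h = h from by ring, show 2*(1/2:ℝ) + h = 1 + h from by ring] at this
    rw [this, smul_eq_mul]
  have e3 : ∫ u in h..(1+h), w ((u-h)/2) * G u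
      = (∫ u in h..(1:ℝ), w ((u-h)/2) * G u) + ∫ u in (1:ℝ)..(1+h), w ((u-h)/2) * G u :=
    (intervalIntegral.integral_add_adjacent_intervals (iF1 h 1) (iF1 1 (1+h))).symm
  have e4 : ∫ u in (1:ℝ)..(1+h), w ((u-h)/2) * G u
      = ∫ u in (0:ℝ)..h, w ((u+1-h)/2) * G u := by
    have := intervalIntegral.integral_comp_add_right (a := 0) (b := h)
      (fun u : ℝ => w ((u-h)/2) * G u) 1
    rw [show (0:ℝ) + 1 = 1 from by ring, show h + 1 = 1 + h from by ring] at this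
    rw [← this]
    apply intervalIntegral.integral_congr
    intro u _
    show w ((u + 1 - h)/2) * G (u + 1) = w ((u+1-h)/2) * G u
    rw [hper u]
  -- right half
  have f1 : ∫ x in (1/2:ℝ)..1, w x * G (bernM h x)
      = ∫ x in (1/2:ℝ)..1, (fun u : ℝ => w ((u+1+h)/2) * G u) (2*x + (-1-h)) := by
    apply congr_fin {(1:ℝ)}
    intro x hx hnot
    rw [Set.uIoc_of_le (by norm_num : (1/2:ℝ) ≤ 1)] at hx
    simp only [Finset.mem_singleton] at hnot
    have hx2 : x < 1 := lt_of_le_of_ne hx.2 hnot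
    show w x * G (bernM h x) = w ((2*x + (-1-h) + 1 + h)/2) * G (2*x + (-1-h))
    rw [show (2*x + (-1-h) + 1 + h)/2 = x from by ring, bernM_right h hx.1.le hx2,
      show 2*x - 1 - h = 2*x + (-1-h) from by ring]
  have f2 : ∫ x in (1/2:ℝ)..1, (fun u : ℝ => w ((u+1+h)/2) * G u) (2*x + (-1-h))
      = 2⁻¹ * ∫ u in (-h)..(1-h), w ((u+1+h)/2) * G u := by
    have := intervalIntegral.integral_comp_mul_add (a := 1/2) (b := 1)
      (fun u : ℝ => w ((u+1+h)/2) * G u) (two_ne_zero) (-1-h)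
    rw [show 2*(1/2:ℝ) + (-1-h) = -h from by ring,
      show 2*(1:ℝ) + (-1-h) = 1 - h from by ring] at this
    rw [this, smul_eq_mul]
  have f3 : ∫ u in (-h)..(1-h), w ((u+1+h)/2) * G u
      = (∫ u in (-h)..(0:ℝ), w ((u+1+h)/2) * G u)
        + ∫ u in (0:ℝ)..(1-h), w ((u+1+h)/2) * G u :=
    (intervalIntegral.integral_add_adjacent_intervals (iF2 (-h) 0) (iF2 0 (1-h))).symm
  have f4 : ∫ u in (-h)..(0:ℝ), w ((u+1+h)/2) * G u
      = ∫ u in (1-h)..(1:ℝ), w ((u+h)/2) * G u := by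
    have := intervalIntegral.integral_comp_add_right (a := 1-h) (b := 1)
      (fun u : ℝ => w ((u+1+h)/2) * G u) (-1)
    rw [show (1-h) + (-1) = -h from by ring, show (1:ℝ) + (-1) = 0 from by ring] at this
    rw [← this]
    apply intervalIntegral.integral_congr
    intro u _
    show w ((u + -1 + 1 + h)/2) * G (u + -1) = w ((u+h)/2) * G u
    have hp := hper (u + -1)
    rw [show u + -1 + 1 = u from by ring] at hp
    rw [show (u + -1 + 1 + h)/2 = (u+h)/2 from by ring, hp]
  rw [← intervalIntegral.integral_add_adjacent_intervals (hcompI 0 (1/2)) (hcompI (1/2) 1),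
    e1, e2, e3, e4, f1, f2, f3, f4]
  ring

/-- (B): Lebesgue measure on the circle is invariant. -/
lemma corB (h : ℝ) (h1 : 1/2 ≤ h) (h2 : h ≤ 1) (G : ℝ → ℝ) (hG : Measurable G)
    {CG : ℝ} (hGb : ∀ x, |G x| ≤ CG) (hper : ∀ x, G (x + 1) = G x) :
    ∫ x in (0:ℝ)..1, G (bernM h x) = ∫ x in (0:ℝ)..1, G x := by
  have h0 : (0:ℝ) ≤ h := by linarith
  have e0 : ∫ x in (0:ℝ)..1, G (bernM h x) = ∫ x in (0:ℝ)..1, (fun _ : ℝ => (1:ℝ)) x * G (bernM h x) := by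
    apply intervalIntegral.integral_congr; intro x _; simp
  rw [e0, key h (fun _ => (1:ℝ)) G measurable_const hG (Cw := 1) (fun x => by norm_num) hGb hper]
  simp only [one_mul]
  have g1 := intervalIntegral.integral_add_adjacent_intervals
    (II_G hG hGb 0 h) (II_G hG hGb h 1)
  have g2 := intervalIntegral.integral_add_adjacent_intervals
    (II_G hG hGb 0 (1-h)) (II_G hG hGb (1-h) 1)
  linarith

/-- (Z): the step function `ss` is annihilated. -/
lemma corZ (h : ℝ) (h1 : 1/2 ≤ h) (h2 : h ≤ 1) (G : ℝ → ℝ) (hG : Measurable G)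
    {CG : ℝ} (hGb : ∀ x, |G x| ≤ CG) (hper : ∀ x, G (x + 1) = G x) :
    ∫ x in (0:ℝ)..1, ss h x * G (bernM h x) = 0 := by
  have h0 : (0:ℝ) ≤ h := by linarith
  have hb1 : (0:ℝ) ≤ 1 - h := by linarith
  have hb2 : 1 - h ≤ h := by linarith
  rw [key h (ss h) G (measurable_ss h) hG (Cw := 1) (ss_bdd h h0 h2) hGb hper]
  have iA : ∀ f : ℝ → ℝ, Measurable f → ∀ a b : ℝ,
      IntervalIntegrable (fun u : ℝ => ss h (f u) * G u) volume a b := by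
    intro f hf a b
    apply II (((measurable_ss h).comp hf).mul hG) (C := 1 * CG)
    intro x _
    rw [Pi.mul_apply, abs_mul]
    exact mul_le_mul (ss_bdd h h0 h2 _) (hGb _) (abs_nonneg _) zero_le_one
  have iG : ∀ c a b : ℝ, IntervalIntegrable (fun u : ℝ => c * G u) volume a b :=
    fun c a b => (II_G hG hGb a b).const_mul c
  have m1 : Measurable (fun u : ℝ => (u+1-h)/2) :=
    ((measurable_id.add_const 1).sub_const h).div_const 2
  have m2 : Measurable (fun u : ℝ => (u-h)/2) := (measurable_id.sub_const h).div_const 2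
  have m4 : Measurable (fun u : ℝ => (u+h)/2) := (measurable_id.add_const h).div_const 2
  have sval : ∀ y : ℝ, (y < 1 - h → ss h y = -h/2) ∧
      (1 - h ≤ y → y < 1/2 → ss h y = -(1/4) - h/2) ∧
      (1/2 ≤ y → y < h → ss h y = 1/4 + h/2) ∧ (h ≤ y → ss h y = h/2) := by
    intro y
    unfold ss
    refine ⟨fun hy => by rw [if_pos hy], fun hy1 hy2 => ?_, fun hy1 hy2 => ?_, fun hy => ?_⟩
    · rw [if_neg (by linarith), if_pos hy2]
    · rw [if_neg (by linarith), if_neg (by linarith), if_pos hy2]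
    · rw [if_neg (by linarith), if_neg (by linarith), if_neg (by linarith)]
  have T1a : ∫ u in (0:ℝ)..(1-h), ss h ((u+1-h)/2) * G u
      = ∫ u in (0:ℝ)..(1-h), (-h/2) * G u := by
    apply congr_fin {(1-h : ℝ)}
    intro u hu hnot
    rw [Set.uIoc_of_le hb1] at hu
    simp only [Finset.mem_singleton] at hnot
    have hu1 : 0 < u := hu.1
    have hu2 : u < 1 - h := lt_of_le_of_ne hu.2 hnot
    rw [(sval ((u+1-h)/2)).1 (by linarith)]
  have T1b : ∫ u in (1-h:ℝ)..h, ss h ((u+1-h)/2) * G u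
      = ∫ u in (1-h:ℝ)..h, (-(1/4) - h/2) * G u := by
    apply congr_fin {(h : ℝ)}
    intro u hu hnot
    rw [Set.uIoc_of_le hb2] at hu
    simp only [Finset.mem_singleton] at hnot
    have hu1 : 1 - h < u := hu.1
    have hu2 : u < h := lt_of_le_of_ne hu.2 hnot
    rw [(sval ((u+1-h)/2)).2.1 (by linarith) (by linarith)]
  have T2 : ∫ u in (h:ℝ)..1, ss h ((u-h)/2) * G u
      = ∫ u in (h:ℝ)..1, (-h/2) * G u := by
    apply congr_fin {(1 : ℝ)}
    intro u hu hnot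
    rw [Set.uIoc_of_le h2] at hu
    simp only [Finset.mem_singleton] at hnot
    have hu1 : h < u := hu.1
    have hu2 : u < 1 := lt_of_le_of_ne hu.2 hnot
    rw [(sval ((u-h)/2)).1 (by linarith)]
  have T3 : ∫ u in (0:ℝ)..(1-h), ss h ((u+1+h)/2) * G u
      = ∫ u in (0:ℝ)..(1-h), (h/2) * G u := by
    apply congr_fin (∅ : Finset ℝ)
    intro u hu _
    rw [Set.uIoc_of_le hb1] at hu
    have hu1 : 0 < u := hu.1
    rw [(sval ((u+1+h)/2)).2.2.2 (by linarith)]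
  have T4a : ∫ u in (1-h:ℝ)..h, ss h ((u+h)/2) * G u
      = ∫ u in (1-h:ℝ)..h, (1/4 + h/2) * G u := by
    apply congr_fin {(h : ℝ)}
    intro u hu hnot
    rw [Set.uIoc_of_le hb2] at hu
    simp only [Finset.mem_singleton] at hnot
    have hu1 : 1 - h < u := hu.1
    have hu2 : u < h := lt_of_le_of_ne hu.2 hnot
    rw [(sval ((u+h)/2)).2.2.1 (by linarith) (by linarith)]
  have T4b : ∫ u in (h:ℝ)..1, ss h ((u+h)/2) * G u
      = ∫ u in (h:ℝ)..1, (h/2) * G u := by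
    apply congr_fin (∅ : Finset ℝ)
    intro u hu _
    rw [Set.uIoc_of_le h2] at hu
    have hu1 : h < u := hu.1
    rw [(sval ((u+h)/2)).2.2.2 (by linarith)]
  have s1 : ∫ u in (0:ℝ)..h, ss h ((u+1-h)/2) * G u
      = (∫ u in (0:ℝ)..(1-h), ss h ((u+1-h)/2) * G u)
        + ∫ u in (1-h:ℝ)..h, ss h ((u+1-h)/2) * G u :=
    (intervalIntegral.integral_add_adjacent_intervals (iA _ m1 0 (1-h)) (iA _ m1 (1-h) h)).symm
  have s4 : ∫ u in (1-h:ℝ)..1, ss h ((u+h)/2) * G u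
      = (∫ u in (1-h:ℝ)..h, ss h ((u+h)/2) * G u)
        + ∫ u in (h:ℝ)..1, ss h ((u+h)/2) * G u :=
    (intervalIntegral.integral_add_adjacent_intervals (iA _ m4 (1-h) h) (iA _ m4 h 1)).symm
  rw [s1, s4, T1a, T1b, T2, T3, T4a, T4b,
    intervalIntegral.integral_const_mul, intervalIntegral.integral_const_mul,
    intervalIntegral.integral_const_mul, intervalIntegral.integral_const_mul,
    intervalIntegral.integral_const_mul, intervalIntegral.integral_const_mul]
  ring

/-- (★): transfer-operator identity for `dd`. -/
lemma corStar (h : ℝ) (h1 : 1/2 ≤ h) (h2 : h ≤ 1) (G : ℝ → ℝ) (hG : Measurable G)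
    {CG : ℝ} (hGb : ∀ x, |G x| ≤ CG) (hper : ∀ x, G (x + 1) = G x) :
    ∫ x in (0:ℝ)..1, dd h x * G (bernM h x)
      = 2⁻¹ * (∫ x in (0:ℝ)..1, dd h x * G x) + ∫ x in (0:ℝ)..1, ss h x * G x := by
  have h0 : (0:ℝ) ≤ h := by linarith
  have hb1 : (0:ℝ) ≤ 1 - h := by linarith
  have hb2 : 1 - h ≤ 1/2 := by linarith
  have hb3 : (1:ℝ)/2 ≤ h := h1
  rw [key h (dd h) G (measurable_dd h) hG (Cw := 2) (dd_bdd h h0 h2) hGb hper]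
  -- evaluate dd at the mapped points
  have T1 : ∫ u in (0:ℝ)..h, dd h ((u+1-h)/2) * G u
      = ∫ u in (0:ℝ)..h, ((1/2)*u + (1+h)/2) * G u := by
    apply congr_fin {(h : ℝ)}
    intro u hu hnot
    rw [Set.uIoc_of_le h0] at hu
    simp only [Finset.mem_singleton] at hnot
    have hu1 : 0 < u := hu.1
    have hu2 : u < h := lt_of_le_of_ne hu.2 hnot
    have e : dd h ((u+1-h)/2) = (1/2)*u + (1+h)/2 := by
      unfold dd
      rw [bernM_left h (by linarith) (by linarith)]; ring
    rw [e]
  have T2 : ∫ u in (h:ℝ)..1, dd h ((u-h)/2) * G u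
      = ∫ u in (h:ℝ)..1, ((1/2)*u + h/2) * G u := by
    apply congr_fin (∅ : Finset ℝ)
    intro u hu _
    rw [Set.uIoc_of_le h2] at hu
    have hu1 : h < u := hu.1
    have hu2 : u ≤ 1 := hu.2
    have e : dd h ((u-h)/2) = (1/2)*u + h/2 := by
      unfold dd
      rw [bernM_left h (by linarith) (by linarith)]; ring
    rw [e]
  have T3 : ∫ u in (0:ℝ)..(1-h), dd h ((u+1+h)/2) * G u
      = ∫ u in (0:ℝ)..(1-h), ((1/2)*u + (-1-h)/2) * G u := by
    apply congr_fin {(1-h : ℝ)}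
    intro u hu hnot
    rw [Set.uIoc_of_le hb1] at hu
    simp only [Finset.mem_singleton] at hnot
    have hu1 : 0 < u := hu.1
    have hu2 : u < 1 - h := lt_of_le_of_ne hu.2 hnot
    have e : dd h ((u+1+h)/2) = (1/2)*u + (-1-h)/2 := by
      unfold dd
      rw [bernM_right h (by linarith) (by linarith)]; ring
    rw [e]
  have T4 : ∫ u in (1-h:ℝ)..1, dd h ((u+h)/2) * G u
      = ∫ u in (1-h:ℝ)..1, ((1/2)*u + (-h-2)/2) * G u := by
    apply congr_fin {(1 : ℝ)}
    intro u hu hnot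
    rw [Set.uIoc_of_le (by linarith)] at hu
    simp only [Finset.mem_singleton] at hnot
    have hu1 : 1 - h < u := hu.1
    have hu2 : u < 1 := lt_of_le_of_ne hu.2 hnot
    have e : dd h ((u+h)/2) = (1/2)*u + (-h-2)/2 := by
      unfold dd
      rw [bernM_right h (by linarith) (by linarith)]; ring
    rw [e]
  -- RHS dd-part
  have iDG : ∀ a b : ℝ, IntervalIntegrable (fun x => dd h x * G x) volume a b := by
    intro a b
    apply II ((measurable_dd h).mul hG) (C := 2 * CG)
    intro x _
    rw [Pi.mul_apply, abs_mul]
    exact mul_le_mul (dd_bdd h h0 h2 x) (hGb x) (abs_nonneg _) (by linarith [dd_bdd h h0 h2 x, abs_nonneg (dd h x)])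
  have R1 : ∫ x in (0:ℝ)..1, dd h x * G x
      = (∫ u in (0:ℝ)..(1/2), dd h u * G u) + ∫ u in (1/2:ℝ)..1, dd h u * G u :=
    (intervalIntegral.integral_add_adjacent_intervals (iDG 0 (1/2)) (iDG (1/2) 1)).symm
  have R1a : ∫ u in (0:ℝ)..(1/2), dd h u * G u
      = ∫ u in (0:ℝ)..(1/2), (1*u + h) * G u := by
    apply congr_fin {(1/2 : ℝ)}
    intro u hu hnot
    rw [Set.uIoc_of_le (by norm_num)] at hu
    simp only [Finset.mem_singleton] at hnot
    have hu1 : 0 < u := hu.1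
    have hu2 : u < 1/2 := lt_of_le_of_ne hu.2 hnot
    have e : dd h u = 1*u + h := by
      unfold dd; rw [bernM_left h (by linarith) hu2]; ring
    rw [e]
  have R1b : ∫ u in (1/2:ℝ)..1, dd h u * G u
      = ∫ u in (1/2:ℝ)..1, (1*u + (-1-h)) * G u := by
    apply congr_fin {(1 : ℝ)}
    intro u hu hnot
    rw [Set.uIoc_of_le (by norm_num)] at hu
    simp only [Finset.mem_singleton] at hnot
    have hu1 : 1/2 < u := hu.1
    have hu2 : u < 1 := lt_of_le_of_ne hu.2 hnot
    have e : dd h u = 1*u + (-1-h) := by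
      unfold dd; rw [bernM_right h (by linarith) hu2]; ring
    rw [e]
  -- RHS ss-part: split into 4 cells and evaluate
  have iSG : ∀ a b : ℝ, IntervalIntegrable (fun x => ss h x * G x) volume a b := by
    intro a b
    apply II ((measurable_ss h).mul hG) (C := 1 * CG)
    intro x _
    rw [Pi.mul_apply, abs_mul]
    exact mul_le_mul (ss_bdd h h0 h2 x) (hGb x) (abs_nonneg _) zero_le_one
  have R2 : ∫ x in (0:ℝ)..1, ss h x * G x
      = (((∫ u in (0:ℝ)..(1-h), ss h u * G u) + ∫ u in (1-h:ℝ)..(1/2), ss h u * G u)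
        + ∫ u in (1/2:ℝ)..h, ss h u * G u) + ∫ u in (h:ℝ)..1, ss h u * G u := by
    rw [intervalIntegral.integral_add_adjacent_intervals (iSG 0 (1-h)) (iSG (1-h) (1/2)),
      intervalIntegral.integral_add_adjacent_intervals (iSG 0 (1/2)) (iSG (1/2) h),
      intervalIntegral.integral_add_adjacent_intervals (iSG 0 h) (iSG h 1)]
  have R2a : ∫ u in (0:ℝ)..(1-h), ss h u * G u
      = ∫ u in (0:ℝ)..(1-h), (-h/2) * G u := by
    apply congr_fin {(1-h : ℝ)}
    intro u hu hnot
    rw [Set.uIoc_of_le hb1] at hu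
    simp only [Finset.mem_singleton] at hnot
    have hu2 : u < 1 - h := lt_of_le_of_ne hu.2 hnot
    have e : ss h u = -h/2 := by unfold ss; rw [if_pos hu2]
    rw [e]
  have R2b : ∫ u in (1-h:ℝ)..(1/2), ss h u * G u
      = ∫ u in (1-h:ℝ)..(1/2), (-(1/4) - h/2) * G u := by
    apply congr_fin {(1/2 : ℝ)}
    intro u hu hnot
    rw [Set.uIoc_of_le hb2] at hu
    simp only [Finset.mem_singleton] at hnot
    have hu1 : 1 - h < u := hu.1
    have hu2 : u < 1/2 := lt_of_le_of_ne hu.2 hnot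
    have e : ss h u = -(1/4) - h/2 := by
      unfold ss; rw [if_neg (by linarith), if_pos hu2]
    rw [e]
  have R2c : ∫ u in (1/2:ℝ)..h, ss h u * G u
      = ∫ u in (1/2:ℝ)..h, (1/4 + h/2) * G u := by
    apply congr_fin {(h : ℝ)}
    intro u hu hnot
    rw [Set.uIoc_of_le hb3] at hu
    simp only [Finset.mem_singleton] at hnot
    have hu1 : 1/2 < u := hu.1
    have hu2 : u < h := lt_of_le_of_ne hu.2 hnot
    have e : ss h u = 1/4 + h/2 := by
      unfold ss; rw [if_neg (by linarith), if_neg (by linarith), if_pos hu2]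
    rw [e]
  have R2d : ∫ u in (h:ℝ)..1, ss h u * G u
      = ∫ u in (h:ℝ)..1, (h/2) * G u := by
    apply congr_fin (∅ : Finset ℝ)
    intro u hu _
    rw [Set.uIoc_of_le h2] at hu
    have hu1 : h < u := hu.1
    have e : ss h u = h/2 := by
      unfold ss; rw [if_neg (by linarith), if_neg (by linarith), if_neg (by linarith)]
    rw [e]
  -- split the affine integrals into cells
  have iAff : ∀ α β a b : ℝ, IntervalIntegrable (fun u => (α*u+β)*G u) volume a b :=
    fun α β a b => II_mul_G hG hGb α β a b
  have S1 : ∫ u in (0:ℝ)..h, ((1/2)*u + (1+h)/2) * G u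
      = ((∫ u in (0:ℝ)..(1-h), ((1/2)*u + (1+h)/2) * G u)
        + ∫ u in (1-h:ℝ)..(1/2), ((1/2)*u + (1+h)/2) * G u)
        + ∫ u in (1/2:ℝ)..h, ((1/2)*u + (1+h)/2) * G u := by
    rw [intervalIntegral.integral_add_adjacent_intervals (iAff (1/2) ((1+h)/2) 0 (1-h))
        (iAff (1/2) ((1+h)/2) (1-h) (1/2)),
      intervalIntegral.integral_add_adjacent_intervals (iAff (1/2) ((1+h)/2) 0 (1/2))
        (iAff (1/2) ((1+h)/2) (1/2) h)]
  have S4 : ∫ u in (1-h:ℝ)..1, ((1/2)*u + (-h-2)/2) * G u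
      = ((∫ u in (1-h:ℝ)..(1/2), ((1/2)*u + (-h-2)/2) * G u)
        + ∫ u in (1/2:ℝ)..h, ((1/2)*u + (-h-2)/2) * G u)
        + ∫ u in (h:ℝ)..1, ((1/2)*u + (-h-2)/2) * G u := by
    rw [intervalIntegral.integral_add_adjacent_intervals (iAff (1/2) ((-h-2)/2) (1-h) (1/2))
        (iAff (1/2) ((-h-2)/2) (1/2) h),
      intervalIntegral.integral_add_adjacent_intervals (iAff (1/2) ((-h-2)/2) (1-h) h)
        (iAff (1/2) ((-h-2)/2) h 1)]
  have SR1a : ∫ u in (0:ℝ)..(1/2), (1*u + h) * G u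
      = (∫ u in (0:ℝ)..(1-h), (1*u + h) * G u)
        + ∫ u in (1-h:ℝ)..(1/2), (1*u + h) * G u :=
    (intervalIntegral.integral_add_adjacent_intervals (iAff 1 h 0 (1-h))
      (iAff 1 h (1-h) (1/2))).symm
  have SR1b : ∫ u in (1/2:ℝ)..1, (1*u + (-1-h)) * G u
      = (∫ u in (1/2:ℝ)..h, (1*u + (-1-h)) * G u)
        + ∫ u in (h:ℝ)..1, (1*u + (-1-h)) * G u :=
    (intervalIntegral.integral_add_adjacent_intervals (iAff 1 (-1-h) (1/2) h)
      (iAff 1 (-1-h) h 1)).symm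
  rw [T1, T2, T3, T4, R1, R1a, R1b, R2, R2a, R2b, R2c, R2d, S1, S4, SR1a, SR1b,
    affine_split hG hGb (1/2) ((1+h)/2) 0 (1-h), affine_split hG hGb (1/2) ((1+h)/2) (1-h) (1/2),
    affine_split hG hGb (1/2) ((1+h)/2) (1/2) h, affine_split hG hGb (1/2) (h/2) h 1,
    affine_split hG hGb (1/2) ((-1-h)/2) 0 (1-h),
    affine_split hG hGb (1/2) ((-h-2)/2) (1-h) (1/2), affine_split hG hGb (1/2) ((-h-2)/2) (1/2) h,
    affine_split hG hGb (1/2) ((-h-2)/2) h 1,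
    affine_split hG hGb 1 h 0 (1-h), affine_split hG hGb 1 h (1-h) (1/2),
    affine_split hG hGb 1 (-1-h) (1/2) h, affine_split hG hGb 1 (-1-h) h 1,
    intervalIntegral.integral_const_mul, intervalIntegral.integral_const_mul,
    intervalIntegral.integral_const_mul, intervalIntegral.integral_const_mul]
  ring

lemma Jval (h : ℝ) (h1 : 1/2 ≤ h) (h2 : h ≤ 1) :
    ∫ x in (0:ℝ)..1, dd h x * dd h x = h^2 + h/2 + 1/12 := by
  have h0 : (0:ℝ) ≤ h := by linarith
  have iD : ∀ a b : ℝ, IntervalIntegrable (fun x => dd h x * dd h x) volume a b := by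
    intro a b
    apply II ((measurable_dd h).mul (measurable_dd h)) (C := 4)
    intro x _
    rw [Pi.mul_apply, abs_mul]
    have := dd_bdd h h0 h2 x
    nlinarith [abs_nonneg (dd h x)]
  rw [← intervalIntegral.integral_add_adjacent_intervals (iD 0 (1/2)) (iD (1/2) 1)]
  have e1 : ∫ x in (0:ℝ)..(1/2), dd h x * dd h x
      = ∫ x in (0:ℝ)..(1/2), (1*x^2 + (2*h)*x + h^2) := by
    apply congr_fin {(1/2 : ℝ)}
    intro u hu hnot
    rw [Set.uIoc_of_le (by norm_num)] at hu
    simp only [Finset.mem_singleton] at hnot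
    have hu1 : 0 < u := hu.1
    have hu2 : u < 1/2 := lt_of_le_of_ne hu.2 hnot
    have e : dd h u = u + h := by unfold dd; rw [bernM_left h (by linarith) hu2]; ring
    rw [e]; ring
  have e2 : ∫ x in (1/2:ℝ)..1, dd h x * dd h x
      = ∫ x in (1/2:ℝ)..1, (1*x^2 + (-2-2*h)*x + (1+h)^2) := by
    apply congr_fin {(1 : ℝ)}
    intro u hu hnot
    rw [Set.uIoc_of_le (by norm_num)] at hu
    simp only [Finset.mem_singleton] at hnot
    have hu1 : 1/2 < u := hu.1
    have hu2 : u < 1 := lt_of_le_of_ne hu.2 hnot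
    have e : dd h u = u - 1 - h := by unfold dd; rw [bernM_right h (by linarith) hu2]; ring
    rw [e]; ring
  rw [e1, e2, integral_quad, integral_quad]
  ring

lemma Sval (h : ℝ) (h1 : 1/2 ≤ h) (h2 : h ≤ 1) :
    ∫ x in (0:ℝ)..1, ss h x * dd h x = 3/16 - 3*h^2/4 - 3*h/8 := by
  have h0 : (0:ℝ) ≤ h := by linarith
  have iSD : ∀ a b : ℝ, IntervalIntegrable (fun x => ss h x * dd h x) volume a b := by
    intro a b
    apply II ((measurable_ss h).mul (measurable_dd h)) (C := 2)
    intro x _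
    rw [Pi.mul_apply, abs_mul]
    have := dd_bdd h h0 h2 x
    have := ss_bdd h h0 h2 x
    nlinarith [abs_nonneg (dd h x), abs_nonneg (ss h x)]
  rw [← intervalIntegral.integral_add_adjacent_intervals (iSD 0 h) (iSD h 1),
    ← intervalIntegral.integral_add_adjacent_intervals (iSD 0 (1/2)) (iSD (1/2) h),
    ← intervalIntegral.integral_add_adjacent_intervals (iSD 0 (1-h)) (iSD (1-h) (1/2))]
  have e1 : ∫ x in (0:ℝ)..(1-h), ss h x * dd h x
      = ∫ x in (0:ℝ)..(1-h), (0*x^2 + (-h/2)*x + (-h/2)*h) := by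
    apply congr_fin {(1-h : ℝ)}
    intro u hu hnot
    rw [Set.uIoc_of_le (by linarith)] at hu
    simp only [Finset.mem_singleton] at hnot
    have hu1 : 0 < u := hu.1
    have hu2 : u < 1 - h := lt_of_le_of_ne hu.2 hnot
    have es : ss h u = -h/2 := by unfold ss; rw [if_pos hu2]
    have ed : dd h u = u + h := by unfold dd; rw [bernM_left h (by linarith) (by linarith)]; ring
    rw [es, ed]; ring
  have e2 : ∫ x in (1-h:ℝ)..(1/2), ss h x * dd h x
      = ∫ x in (1-h:ℝ)..(1/2), (0*x^2 + (-(1/4)-h/2)*x + (-(1/4)-h/2)*h) := by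
    apply congr_fin {(1/2 : ℝ)}
    intro u hu hnot
    rw [Set.uIoc_of_le (by linarith)] at hu
    simp only [Finset.mem_singleton] at hnot
    have hu1 : 1 - h < u := hu.1
    have hu2 : u < 1/2 := lt_of_le_of_ne hu.2 hnot
    have es : ss h u = -(1/4) - h/2 := by
      unfold ss; rw [if_neg (by linarith), if_pos hu2]
    have ed : dd h u = u + h := by unfold dd; rw [bernM_left h (by linarith) hu2]; ring
    rw [es, ed]; ring
  have e3 : ∫ x in (1/2:ℝ)..h, ss h x * dd h x
      = ∫ x in (1/2:ℝ)..h, (0*x^2 + (1/4+h/2)*x + (1/4+h/2)*(-1-h)) := by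
    apply congr_fin {(h : ℝ)}
    intro u hu hnot
    rw [Set.uIoc_of_le h1] at hu
    simp only [Finset.mem_singleton] at hnot
    have hu1 : 1/2 < u := hu.1
    have hu2 : u < h := lt_of_le_of_ne hu.2 hnot
    have es : ss h u = 1/4 + h/2 := by
      unfold ss; rw [if_neg (by linarith), if_neg (by linarith), if_pos hu2]
    have ed : dd h u = u - 1 - h := by
      unfold dd; rw [bernM_right h (by linarith) (by linarith)]; ring
    rw [es, ed]; ring
  have e4 : ∫ x in (h:ℝ)..1, ss h x * dd h x
      = ∫ x in (h:ℝ)..1, (0*x^2 + (h/2)*x + (h/2)*(-1-h)) := by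
    apply congr_fin {(1 : ℝ)}
    intro u hu hnot
    rw [Set.uIoc_of_le h2] at hu
    simp only [Finset.mem_singleton] at hnot
    have hu1 : h < u := hu.1
    have hu2 : u < 1 := lt_of_le_of_ne hu.2 hnot
    have es : ss h u = h/2 := by
      unfold ss; rw [if_neg (by linarith), if_neg (by linarith), if_neg (by linarith)]
    have ed : dd h u = u - 1 - h := by
      unfold dd; rw [bernM_right h (by linarith) hu2]; ring
    rw [es, ed]; ring
  rw [e1, e2, e3, e4, integral_quad, integral_quad, integral_quad, integral_quad]
  ring

noncomputable def Jn (h : ℝ) (n : ℕ) : ℝ := ∫ x in (0:ℝ)..1, gg h n x * gg h n x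
noncomputable def Pn (h : ℝ) (n : ℕ) : ℝ := ∫ x in (0:ℝ)..1, dd h x * gg h n x
noncomputable def Qn (h : ℝ) (n : ℕ) : ℝ := ∫ x in (0:ℝ)..1, ss h x * gg h n x

section rec

variable {h : ℝ} (h1 : 1/2 ≤ h) (h2 : h ≤ 1)

include h1 h2

lemma recQ (n : ℕ) : Qn h (n+1) = 3/16 - 3*h^2/4 - 3*h/8 := by
  have h0 : (0:ℝ) ≤ h := by linarith
  have hM := measurable_bernM h
  have i1 : IntervalIntegrable (fun x => ss h x * gg h n (bernM h x)) volume 0 1 := by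
    apply II ((measurable_ss h).mul ((measurable_gg h n).comp hM)) (C := 1 * (2*n))
    intro x _
    rw [Pi.mul_apply, abs_mul]
    exact mul_le_mul (ss_bdd h h0 h2 x) (gg_bdd h h0 h2 n _) (abs_nonneg _) zero_le_one
  have i2 : IntervalIntegrable (fun x => ss h x * dd h x) volume 0 1 := by
    apply II ((measurable_ss h).mul (measurable_dd h)) (C := 1 * 2)
    intro x _
    rw [Pi.mul_apply, abs_mul]
    exact mul_le_mul (ss_bdd h h0 h2 x) (dd_bdd h h0 h2 x) (abs_nonneg _) zero_le_one
  have e : Qn h (n+1) = (∫ x in (0:ℝ)..1, ss h x * gg h n (bernM h x))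
      + ∫ x in (0:ℝ)..1, ss h x * dd h x := by
    rw [← intervalIntegral.integral_add i1 i2]
    apply intervalIntegral.integral_congr
    intro x _
    show ss h x * gg h (n+1) x = _
    rw [gg_succ]; ring
  rw [e, corZ h h1 h2 (gg h n) (measurable_gg h n) (gg_bdd h h0 h2 n) (gg_per h n),
    Sval h h1 h2]
  ring

lemma recP (n : ℕ) : Pn h (n+1) = 2⁻¹ * Pn h n + Qn h n + (h^2 + h/2 + 1/12) := by
  have h0 : (0:ℝ) ≤ h := by linarith
  have hM := measurable_bernM h
  have i1 : IntervalIntegrable (fun x => dd h x * gg h n (bernM h x)) volume 0 1 := by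
    apply II ((measurable_dd h).mul ((measurable_gg h n).comp hM)) (C := 2 * (2*n))
    intro x _
    rw [Pi.mul_apply, abs_mul]
    exact mul_le_mul (dd_bdd h h0 h2 x) (gg_bdd h h0 h2 n _) (abs_nonneg _) (by linarith [dd_bdd h h0 h2 x, abs_nonneg (dd h x)])
  have i2 : IntervalIntegrable (fun x => dd h x * dd h x) volume 0 1 := by
    apply II ((measurable_dd h).mul (measurable_dd h)) (C := 2 * 2)
    intro x _
    rw [Pi.mul_apply, abs_mul]
    exact mul_le_mul (dd_bdd h h0 h2 x) (dd_bdd h h0 h2 x) (abs_nonneg _) (by linarith [dd_bdd h h0 h2 x, abs_nonneg (dd h x)])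
  have e : Pn h (n+1) = (∫ x in (0:ℝ)..1, dd h x * gg h n (bernM h x))
      + ∫ x in (0:ℝ)..1, dd h x * dd h x := by
    rw [← intervalIntegral.integral_add i1 i2]
    apply intervalIntegral.integral_congr
    intro x _
    show dd h x * gg h (n+1) x = _
    rw [gg_succ]; ring
  rw [e, corStar h h1 h2 (gg h n) (measurable_gg h n) (gg_bdd h h0 h2 n) (gg_per h n),
    Jval h h1 h2]
  rfl

lemma recJ (n : ℕ) : Jn h (n+1)
    = Jn h n + 2*(2⁻¹ * Pn h n + Qn h n) + (h^2 + h/2 + 1/12) := by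
  have h0 : (0:ℝ) ≤ h := by linarith
  have hM := measurable_bernM h
  have mG2 : Measurable (fun y => gg h n y * gg h n y) := (measurable_gg h n).mul (measurable_gg h n)
  have bG2 : ∀ y, |gg h n y * gg h n y| ≤ (2*n)*(2*n) := by
    intro y
    rw [abs_mul]
    have := gg_bdd h h0 h2 n y
    nlinarith [abs_nonneg (gg h n y)]
  have i1 : IntervalIntegrable (fun x => gg h n (bernM h x) * gg h n (bernM h x)) volume 0 1 := by
    apply II (mG2.comp hM) (C := (2*n)*(2*n))
    exact fun x _ => bG2 _
  have i2 : IntervalIntegrable (fun x => dd h x * gg h n (bernM h x)) volume 0 1 := by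
    apply II ((measurable_dd h).mul ((measurable_gg h n).comp hM)) (C := 2 * (2*n))
    intro x _
    rw [Pi.mul_apply, abs_mul]
    exact mul_le_mul (dd_bdd h h0 h2 x) (gg_bdd h h0 h2 n _) (abs_nonneg _) (by linarith [dd_bdd h h0 h2 x, abs_nonneg (dd h x)])
  have i3 : IntervalIntegrable (fun x => dd h x * dd h x) volume 0 1 := by
    apply II ((measurable_dd h).mul (measurable_dd h)) (C := 2 * 2)
    intro x _
    rw [Pi.mul_apply, abs_mul]
    exact mul_le_mul (dd_bdd h h0 h2 x) (dd_bdd h h0 h2 x) (abs_nonneg _) (by linarith [dd_bdd h h0 h2 x, abs_nonneg (dd h x)])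
  have e : Jn h (n+1) = (∫ x in (0:ℝ)..1, gg h n (bernM h x) * gg h n (bernM h x))
      + ((∫ x in (0:ℝ)..1, 2*(dd h x * gg h n (bernM h x)))
        + ∫ x in (0:ℝ)..1, dd h x * dd h x) := by
    rw [← intervalIntegral.integral_add (i2.const_mul 2) i3,
      ← intervalIntegral.integral_add i1 ((i2.const_mul 2).add i3)]
    apply intervalIntegral.integral_congr
    intro x _
    show gg h (n+1) x * gg h (n+1) x = _
    rw [gg_succ]; ring
  have eB : ∫ x in (0:ℝ)..1, gg h n (bernM h x) * gg h n (bernM h x) = Jn h n :=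
    corB h h1 h2 (fun y => gg h n y * gg h n y) mG2 bG2
      (fun y => by simp only [gg_per])
  rw [e, eB, intervalIntegral.integral_const_mul,
    corStar h h1 h2 (gg h n) (measurable_gg h n) (gg_bdd h h0 h2 n) (gg_per h n),
    Jval h h1 h2]
  unfold Pn Qn
  ring

omit h1 h2 in
lemma J0 : Jn h 0 = 0 := by
  unfold Jn
  have : ∀ x : ℝ, gg h 0 x = 0 := fun x => by unfold gg; simp
  rw [intervalIntegral.integral_congr (g := fun _ => (0:ℝ)) (fun x _ => by rw [this x]; ring)]
  simp

omit h1 h2 in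
lemma P0 : Pn h 0 = 0 := by
  unfold Pn
  have : ∀ x : ℝ, gg h 0 x = 0 := fun x => by unfold gg; simp
  rw [intervalIntegral.integral_congr (g := fun _ => (0:ℝ)) (fun x _ => by rw [this x]; ring)]
  simp

omit h1 h2 in
lemma Q0 : Qn h 0 = 0 := by
  unfold Qn
  have : ∀ x : ℝ, gg h 0 x = 0 := fun x => by unfold gg; simp
  rw [intervalIntegral.integral_congr (g := fun _ => (0:ℝ)) (fun x _ => by rw [this x]; ring)]
  simp

lemma closed : ∀ n : ℕ,
    Jn h (n+1) = (n+1) + (2*h^2 + h - 11/6)*(1 - (1/2)^(n+1))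
    ∧ Pn h (n+1) = h^2/2 + h/4 + 13/24 + (h^2 + h/2 - 11/12)*(1/2)^(n+1) := by
  intro n
  induction n with
  | zero =>
    constructor
    · rw [recJ h1 h2 0, J0, P0 (h := h), Q0 (h := h)]
      push_cast; ring
    · rw [recP h1 h2 0, P0 (h := h), Q0 (h := h)]
      ring
  | succ n ih =>
    obtain ⟨ihJ, ihP⟩ := ih
    constructor
    · rw [recJ h1 h2 (n+1), ihJ, ihP, recQ h1 h2 n]
      push_cast; ring
    · rw [recP h1 h2 (n+1), ihP, recQ h1 h2 n]
      ring

end rec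

end BernAux

theorem stmt12 (h : ℝ) (hh : h ∈ Set.Icc (1/2 : ℝ) 1) :
    Tendsto (fun n : ℕ => (1/(2*(n:ℝ))) * ∫ x in (0:ℝ)..1, ((bernM h)^[n] x - x)^2)
      atTop (nhds (1/2)) := by
  obtain ⟨h1, h2⟩ := hh
  set c : ℝ := 2*h^2 + h - 11/6 with hc
  have hJ : ∀ n : ℕ, (∫ x in (0:ℝ)..1, ((bernM h)^[n] x - x)^2) = BernAux.Jn h n := by
    intro n
    unfold BernAux.Jn
    apply intervalIntegral.integral_congr
    intro x _
    show ((bernM h)^[n] x - x)^2 = BernAux.gg h n x * BernAux.gg h n x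
    unfold BernAux.gg; ring
  have t1 : Tendsto (fun n : ℕ => 1/(n:ℝ)) atTop (nhds 0) :=
    tendsto_one_div_atTop_nhds_zero_nat
  have t2 : Tendsto (fun n : ℕ => ((1:ℝ)/2)^n) atTop (nhds 0) :=
    tendsto_pow_atTop_nhds_zero_of_lt_one (by norm_num) (by norm_num)
  have model : Tendsto
      (fun n : ℕ => 1/2 + (c/2)*(1/(n:ℝ)) - (c/2)*((1/2)^n*(1/(n:ℝ))))
      atTop (nhds (1/2)) := by
    have := ((tendsto_const_nhds (x := (1/2:ℝ)) (f := atTop)).add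
      (t1.const_mul (c/2))).sub ((t2.mul t1).const_mul (c/2))
    norm_num at this
    convert this using 2
    norm_num
  apply model.congr'
  filter_upwards [eventually_ge_atTop 1] with n hn
  obtain ⟨m, rfl⟩ : ∃ m, n = m + 1 := ⟨n - 1, (Nat.succ_pred_eq_of_pos hn).symm⟩
  rw [hJ (m+1), (BernAux.closed h1 h2 m).1]
  have hN : ((m:ℝ) + 1) ≠ 0 := by positivity
  push_cast
  field_simp
  ring
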